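/- Let n ≥ 1, fix j ∈ {1, …, n}, and let σ : ℤ^n → ℂ satisfy the second-difference estimate in the direction e_j: there is C₀ > 0 such that |σ(ℓ+2e_j) − 2σ(ℓ+e_j) + σ(ℓ)| ≤ C₀ ⟨ℓ⟩^{−2} for all ℓ ∈ ℤ^n. Then there exists C > 0 such that for every ℓ ∈ ℤ^n ∖ {0} and every positive integer M with M ≤ |ℓ|/2 one has the discrete Taylor estimate |σ(ℓ + M e_j) − σ(ℓ) − M (σ(ℓ+e_j) − σ(ℓ))| ≤ C M² ⟨ℓ⟩^{−2}. -/

import Mathlib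

open scoped BigOperators

/-- The embedding of the lattice `ℤ^n` into `ℝ^n`. -/
def latt {n : ℕ} (ℓ : Fin n → ℤ) : Fin n → ℝ := fun i => (ℓ i : ℝ)

/-- The Euclidean norm on `ℝ^n`. -/
noncomputable def enorm' {n : ℕ} (x : Fin n → ℝ) : ℝ := Real.sqrt (∑ i, x i ^ 2)

/-- The Japanese bracket `⟨ℓ⟩ = (1 + |ℓ|²)^{1/2}` of a lattice point. -/
noncomputable def jap {n : ℕ} (ℓ : Fin n → ℤ) : ℝ :=
  Real.sqrt (1 + ∑ i, (ℓ i : ℝ) ^ 2)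

lemma diff_id (f : ℕ → ℂ) : ∀ M : ℕ,
    f (M+1) - f M - (f 1 - f 0) = ∑ i ∈ Finset.range M, (f (i+2) - 2 * f (i+1) + f i)
  | 0 => by simp
  | (M+1) => by
    rw [Finset.sum_range_succ, ← diff_id f M]; ring

lemma taylor_id (f : ℕ → ℂ) : ∀ M : ℕ,
    f M - f 0 - (M : ℂ) * (f 1 - f 0)
      = ∑ k ∈ Finset.range M, ∑ i ∈ Finset.range k, (f (i+2) - 2 * f (i+1) + f i)
  | 0 => by simp
  | (M+1) => by
    rw [Finset.sum_range_succ, ← taylor_id f M, ← diff_id f M]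
    push_cast; ring

lemma one_le_jap {n : ℕ} (m : Fin n → ℤ) : 1 ≤ jap m := by
  unfold jap
  have h : (1:ℝ) ≤ 1 + ∑ i, (m i : ℝ) ^ 2 := by
    have := Finset.sum_nonneg (fun i (_ : i ∈ Finset.univ) => sq_nonneg ((m i : ℝ)))
    linarith
  calc (1:ℝ) = Real.sqrt 1 := by simp
  _ ≤ _ := Real.sqrt_le_sqrt h

lemma jap_shift_le {n : ℕ} (j : Fin n) (ℓ : Fin n → ℤ) (i : ℕ)
    (hi : (i : ℝ) ≤ enorm' (latt ℓ) / 2) :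
    jap (ℓ + i • Pi.single j 1) ^ (-2 : ℝ) ≤ 4 * jap ℓ ^ (-2 : ℝ) := by
  set S : ℝ := ∑ k, (ℓ k : ℝ) ^ 2 with hS
  have hS0 : 0 ≤ S := Finset.sum_nonneg fun k _ => sq_nonneg _
  have hss : Real.sqrt S ^ 2 = S := Real.sq_sqrt hS0
  have hi' : (i : ℝ) ≤ Real.sqrt S / 2 := by
    simpa [enorm', latt, hS] using hi
  have key : ∀ k, (((ℓ + i • Pi.single j 1 : Fin n → ℤ)) k : ℝ) ^ 2
      = (ℓ k : ℝ) ^ 2 + (if k = j then 2 * i * (ℓ j : ℝ) + (i:ℝ) ^ 2 else 0) := by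
    intro k
    simp only [Pi.add_apply, Pi.smul_apply, Pi.single_apply, smul_eq_mul]
    split_ifs with hkj
    · subst hkj; push_cast; ring_nf; norm_cast
    · push_cast; simp
  have hsum : ∑ k, (((ℓ + i • Pi.single j 1 : Fin n → ℤ)) k : ℝ) ^ 2
      = S + (2 * i * (ℓ j : ℝ) + (i:ℝ) ^ 2) := by
    simp only [key, Finset.sum_add_distrib, Finset.sum_ite_eq' Finset.univ j,
      Finset.mem_univ, if_true, hS]
  have hℓj2 : (ℓ j : ℝ) ^ 2 ≤ S :=
    Finset.single_le_sum (f := fun k => ((ℓ k : ℝ)) ^ 2)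
      (fun k _ => sq_nonneg _) (Finset.mem_univ j)
  have hℓj : |(ℓ j : ℝ)| ≤ Real.sqrt S := by
    rw [← Real.sqrt_sq_eq_abs]; exact Real.sqrt_le_sqrt hℓj2
  have hi0 : (0:ℝ) ≤ i := Nat.cast_nonneg i
  have h2 : S / 4 ≤ S + (2 * i * (ℓ j : ℝ) + (i:ℝ) ^ 2) := by
    have hneg : -(Real.sqrt S) ≤ (ℓ j : ℝ) := by
      have := neg_abs_le ((ℓ j : ℝ)); linarith
    nlinarith [sq_nonneg (Real.sqrt S - 2 * (i:ℝ)), mul_le_mul_of_nonneg_left hneg hi0]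
  have T := S + (2 * i * (ℓ j : ℝ) + (i:ℝ) ^ 2)
  have hj2 : jap ℓ ≤ 2 * jap (ℓ + i • Pi.single j 1) := by
    unfold jap
    rw [hsum, ← hS]
    calc Real.sqrt (1 + S)
        ≤ Real.sqrt (2 ^ 2 * (1 + (S + (2 * i * (ℓ j : ℝ) + (i:ℝ) ^ 2)))) := by
          apply Real.sqrt_le_sqrt; linarith
      _ = 2 * Real.sqrt (1 + (S + (2 * i * (ℓ j : ℝ) + (i:ℝ) ^ 2))) := by
          rw [Real.sqrt_mul (by positivity), Real.sqrt_sq (by norm_num)]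
  have hA : (0:ℝ) < jap ℓ := lt_of_lt_of_le one_pos (one_le_jap ℓ)
  have hB : (0:ℝ) < jap (ℓ + i • Pi.single j 1) :=
    lt_of_lt_of_le one_pos (one_le_jap _)
  have conv : ∀ m : Fin n → ℤ, jap m ^ (-2 : ℝ) = (jap m ^ 2)⁻¹ := by
    intro m
    rw [show (-2:ℝ) = -((2:ℕ):ℝ) by norm_num,
      Real.rpow_neg (le_of_lt (lt_of_lt_of_le one_pos (one_le_jap m))),
      Real.rpow_natCast]
  rw [conv, conv]
  have hle : jap ℓ ^ 2 / 4 ≤ jap (ℓ + i • Pi.single j 1) ^ 2 := by nlinarith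
  calc (jap (ℓ + i • Pi.single j 1) ^ 2)⁻¹
      ≤ (jap ℓ ^ 2 / 4)⁻¹ := by
        apply inv_anti₀ (by positivity) hle
    _ = 4 * (jap ℓ ^ 2)⁻¹ := by field_simp

/-- Discrete Taylor estimate: if the second differences of `σ` in the direction `e_j` satisfy
`|Δ_j² σ(ℓ)| ≤ C₀ ⟨ℓ⟩^{-2}`, then for `M ≤ |ℓ|/2` one has
`|σ(ℓ + M e_j) - σ(ℓ) - M Δ_j σ(ℓ)| ≤ C M² ⟨ℓ⟩^{-2}`. -/
theorem discrete_taylor_estimate (n : ℕ) (hn : 1 ≤ n) (j : Fin n)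
    (σ : (Fin n → ℤ) → ℂ) (C₀ : ℝ) (hC₀ : 0 < C₀)
    (h : ∀ ℓ : Fin n → ℤ,
      ‖σ (ℓ + 2 • Pi.single j 1) - 2 * σ (ℓ + Pi.single j 1) + σ ℓ‖
        ≤ C₀ * jap ℓ ^ (-2 : ℝ)) :
    ∃ C > 0, ∀ ℓ : Fin n → ℤ, ℓ ≠ 0 → ∀ M : ℕ, 0 < M →
      (M : ℝ) ≤ enorm' (latt ℓ) / 2 →
      ‖σ (ℓ + M • Pi.single j 1) - σ ℓ - (M : ℂ) * (σ (ℓ + Pi.single j 1) - σ ℓ)‖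
        ≤ C * (M : ℝ) ^ 2 * jap ℓ ^ (-2 : ℝ) := by
  refine ⟨4 * C₀, by positivity, ?_⟩
  intro ℓ _ M _ hMle
  set e : Fin n → ℤ := Pi.single j 1 with he
  have key := taylor_id (fun k => σ (ℓ + k • e)) M
  simp only [zero_smul, add_zero, one_smul] at key
  set J : ℝ := jap ℓ ^ (-2 : ℝ) with hJ
  have hJ0 : 0 < J := by
    rw [hJ]; exact Real.rpow_pos_of_pos (lt_of_lt_of_le one_pos (one_le_jap ℓ)) _
  have hterm : ∀ k ∈ Finset.range M, ∀ i ∈ Finset.range k,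
      ‖σ (ℓ + (i+2) • e) - 2 * σ (ℓ + (i+1) • e) + σ (ℓ + i • e)‖ ≤ C₀ * (4 * J) := by
    intro k hk i hi
    have h2e : ℓ + (i+2) • e = (ℓ + i • e) + 2 • e := by
      rw [add_smul, add_assoc]
    have h1e : ℓ + (i+1) • e = (ℓ + i • e) + e := by
      rw [add_smul, one_smul, add_assoc]
    rw [h2e, h1e]
    have hshift : jap (ℓ + i • e) ^ (-2 : ℝ) ≤ 4 * J := by
      rw [hJ, he]
      apply jap_shift_le
      have hik : (i:ℝ) ≤ (M:ℝ) := by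
        have : i ≤ M := le_of_lt (lt_of_lt_of_le (Finset.mem_range.mp hi)
          (Nat.le_of_lt_succ (Nat.lt_succ_of_lt (Finset.mem_range.mp hk))))
        exact_mod_cast this
      linarith
    calc ‖σ ((ℓ + i • e) + 2 • e) - 2 * σ ((ℓ + i • e) + e) + σ (ℓ + i • e)‖
        ≤ C₀ * jap (ℓ + i • e) ^ (-2 : ℝ) := h (ℓ + i • e)
      _ ≤ C₀ * (4 * J) := by
          exact mul_le_mul_of_nonneg_left hshift (le_of_lt hC₀)
  calc ‖σ (ℓ + M • e) - σ ℓ - (M : ℂ) * (σ (ℓ + e) - σ ℓ)‖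
      = ‖∑ k ∈ Finset.range M, ∑ i ∈ Finset.range k,
          (σ (ℓ + (i+2) • e) - 2 * σ (ℓ + (i+1) • e) + σ (ℓ + i • e))‖ := by rw [key]
    _ ≤ ∑ k ∈ Finset.range M, ‖∑ i ∈ Finset.range k,
          (σ (ℓ + (i+2) • e) - 2 * σ (ℓ + (i+1) • e) + σ (ℓ + i • e))‖ :=
        norm_sum_le _ _
    _ ≤ ∑ k ∈ Finset.range M, ∑ i ∈ Finset.range k,
          ‖σ (ℓ + (i+2) • e) - 2 * σ (ℓ + (i+1) • e) + σ (ℓ + i • e)‖ :=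
        Finset.sum_le_sum fun k _ => norm_sum_le _ _
    _ ≤ ∑ k ∈ Finset.range M, ∑ _i ∈ Finset.range k, (C₀ * (4 * J)) :=
        Finset.sum_le_sum fun k hk => Finset.sum_le_sum fun i hi => hterm k hk i hi
    _ = ∑ k ∈ Finset.range M, (k : ℝ) * (C₀ * (4 * J)) := by
        simp [Finset.sum_const, nsmul_eq_mul]
    _ ≤ ∑ _k ∈ Finset.range M, (M : ℝ) * (C₀ * (4 * J)) := by
        apply Finset.sum_le_sum
        intro k hk
        have : (k:ℝ) ≤ M := by exact_mod_cast le_of_lt (Finset.mem_range.mp hk)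
        have hpos : (0:ℝ) ≤ C₀ * (4 * J) := by positivity
        exact mul_le_mul_of_nonneg_right this hpos
    _ = 4 * C₀ * (M : ℝ) ^ 2 * J := by
        simp [Finset.sum_const, nsmul_eq_mul]; ring
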